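/- Let θ = r/(r-1) with r ≥ 2, and let l ≤ w ≤ u with 2r < F_0/2^l ≤ 4r and w - l ≤ 5. If f ≥ F_0/λ, then 1/L(w) ≤ (λ/(2r))·exp(4θ), where L(w) = (f/2^w)·exp(-θ F_0/(r·2^w)). -/
import Mathlib

lemma aux_exp7 (k : ℕ) (hk : k ≤ 5) : (2:ℝ)^k ≤ Real.exp (4 - 4/2^k) := by
  have h1 : (2.7:ℝ) ≤ Real.exp 1 := by
    have := Real.exp_one_gt_d9; linarith
  have h3 : (19:ℝ) ≤ Real.exp 3 := by
    have e3 : Real.exp 3 = Real.exp 1 * Real.exp 1 * Real.exp 1 := by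
      rw [show (3:ℝ) = 1 + 1 + 1 by norm_num, Real.exp_add, Real.exp_add]
    nlinarith [Real.exp_pos 1]
  interval_cases k
  · norm_num
  · have := Real.add_one_le_exp (2:ℝ)
    norm_num at *; linarith
  · have : Real.exp (4 - 4/2^2) = Real.exp 3 := by norm_num
    rw [this]; norm_num; linarith
  · have : Real.exp (4 - 4/2^3) = Real.exp 3 * Real.exp (1/2) := by
      rw [← Real.exp_add]; norm_num
    rw [this]
    have h2 : (1:ℝ) ≤ Real.exp (1/2) := Real.one_le_exp (by norm_num)
    nlinarith
  · have : Real.exp (4 - 4/2^4) = Real.exp 3 * Real.exp (3/4) := by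
      rw [← Real.exp_add]; norm_num
    rw [this]
    have h2 : (1:ℝ) ≤ Real.exp (3/4) := Real.one_le_exp (by norm_num)
    nlinarith
  · have : Real.exp (4 - 4/2^5) = Real.exp 3 * Real.exp (7/8) := by
      rw [← Real.exp_add]; norm_num
    rw [this]
    have h2 : (7:ℝ)/8 + 1 ≤ Real.exp (7/8) := Real.add_one_le_exp (7/8)
    nlinarith

/-- With `θ = r/(r-1)`, `r ≥ 2`, `l ≤ w ≤ l + 5`, `2r < F₀/2^l ≤ 4r` and
`f ≥ F₀/λ`, we have `1/L(w) ≤ (λ/(2r))·exp(4θ)` where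
`L(w) = (f/2^w)·exp(-θF₀/(r·2^w))`. -/
theorem stmt_7 (r : ℝ) (hr : 2 ≤ r) (θ : ℝ) (hθ : θ = r / (r - 1))
    (l w : ℕ) (hlw : l ≤ w) (hwl : w ≤ l + 5)
    (F0 f lam : ℝ) (hF0 : 0 < F0) (hf : 0 < f) (hlam : 0 < lam)
    (h1 : 2 * r < F0 / 2 ^ l) (h2 : F0 / 2 ^ l ≤ 4 * r)
    (hflam : F0 / lam ≤ f) :
    1 / (f / 2 ^ w * Real.exp (-(θ * F0 / (r * 2 ^ w)))) ≤
      lam / (2 * r) * Real.exp (4 * θ) := by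
  have hrpos : (0:ℝ) < r := by linarith
  have hr1 : (0:ℝ) < r - 1 := by linarith
  have hθ1 : 1 ≤ θ := by
    rw [hθ, le_div_iff₀ hr1]; linarith
  have hθpos : 0 < θ := by linarith
  set k := w - l with hkdef
  have hw : w = l + k := by omega
  have hk5 : k ≤ 5 := by omega
  have h2l : (0:ℝ) < 2 ^ l := by positivity
  have h2k : (0:ℝ) < (2:ℝ) ^ k := by positivity
  have h2w : (0:ℝ) < (2:ℝ) ^ w := by positivity
  have h2wk : (2:ℝ) ^ w = 2 ^ l * 2 ^ k := by rw [hw, pow_add]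
  -- F0 bounds
  have hF0lb : 2 * r * 2 ^ l < F0 := by
    rw [lt_div_iff₀ h2l] at h1; linarith
  have hF0ub : F0 ≤ 4 * r * 2 ^ l := by
    rw [div_le_iff₀ h2l] at h2; linarith
  -- rewrite LHS
  have hkey : 1 / (f / 2 ^ w * Real.exp (-(θ * F0 / (r * 2 ^ w)))) =
      2 ^ w / f * Real.exp (θ * F0 / (r * 2 ^ w)) := by
    rw [Real.exp_neg]
    field_simp
  rw [hkey]
  -- bound the exponent
  have hexp : θ * F0 / (r * 2 ^ w) ≤ 4 * θ / 2 ^ k := by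
    rw [div_le_div_iff₀ (by positivity) h2k, h2wk]
    have : θ * F0 * 2 ^ k ≤ θ * (4 * r * 2 ^ l) * 2 ^ k := by
      have := mul_le_mul_of_nonneg_left hF0ub (le_of_lt hθpos)
      nlinarith
    nlinarith
  -- bound 2^w / f
  have hF0f : F0 ≤ lam * f := by
    rw [div_le_iff₀ hlam] at hflam; linarith
  have hfrac : 2 ^ w / f ≤ lam * 2 ^ k / (2 * r) := by
    rw [div_le_div_iff₀ hf (by positivity), h2wk]
    nlinarith
  have step1 : (2:ℝ) ^ w / f * Real.exp (θ * F0 / (r * 2 ^ w)) ≤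
      lam * 2 ^ k / (2 * r) * Real.exp (4 * θ / 2 ^ k) := by
    have e1 := Real.exp_le_exp.mpr hexp
    have p1 : 0 < Real.exp (θ * F0 / (r * 2 ^ w)) := Real.exp_pos _
    have p2 : (0:ℝ) ≤ 2 ^ w / f := by positivity
    calc (2:ℝ) ^ w / f * Real.exp (θ * F0 / (r * 2 ^ w))
        ≤ lam * 2 ^ k / (2 * r) * Real.exp (θ * F0 / (r * 2 ^ w)) :=
          mul_le_mul_of_nonneg_right hfrac (le_of_lt p1)
      _ ≤ lam * 2 ^ k / (2 * r) * Real.exp (4 * θ / 2 ^ k) :=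
          mul_le_mul_of_nonneg_left e1 (by positivity)
  refine step1.trans ?_
  -- final: 2^k * exp(4θ/2^k) ≤ exp(4θ)
  have hmono : Real.exp (4 - 4 / 2 ^ k) ≤ Real.exp (4 * θ - 4 * θ / 2 ^ k) := by
    apply Real.exp_le_exp.mpr
    have h1k : 4 / (2:ℝ) ^ k ≤ 4 := by
      rw [div_le_iff₀ h2k]
      nlinarith [one_le_pow₀ (by norm_num : (1:ℝ) ≤ 2) (n := k)]
    have hsub : (0:ℝ) ≤ 1 - 1 / 2 ^ k := by
      have : (1:ℝ) ≤ 2 ^ k := one_le_pow₀ (by norm_num) (n := k)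
      have : (1:ℝ) / 2 ^ k ≤ 1 := by rw [div_le_one h2k]; exact this
      linarith
    have : 4 * (1 - 1 / 2 ^ k) ≤ 4 * θ * (1 - 1 / 2 ^ k) := by nlinarith
    have e1 : 4 * ((1:ℝ) - 1 / 2 ^ k) = 4 - 4 / 2 ^ k := by ring
    have e2 : 4 * θ * ((1:ℝ) - 1 / 2 ^ k) = 4 * θ - 4 * θ / 2 ^ k := by ring
    linarith [e1 ▸ e2 ▸ this]
  have hfin : (2:ℝ) ^ k * Real.exp (4 * θ / 2 ^ k) ≤ Real.exp (4 * θ) := by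
    have h := (aux_exp7 k hk5).trans hmono
    have := mul_le_mul_of_nonneg_right h (le_of_lt (Real.exp_pos (4 * θ / 2 ^ k)))
    rwa [← Real.exp_add, sub_add_cancel] at this
  calc lam * 2 ^ k / (2 * r) * Real.exp (4 * θ / 2 ^ k)
      = lam / (2 * r) * (2 ^ k * Real.exp (4 * θ / 2 ^ k)) := by ring
    _ ≤ lam / (2 * r) * Real.exp (4 * θ) :=
        mul_le_mul_of_nonneg_left hfin (by positivity)
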